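/- Let K be a field, S = K[X_1, ..., X_n], I = ⟨f_1, ..., f_s⟩ an ideal of S, and f ∈ S. Then f belongs to the radical of I if and only if 1 belongs to the ideal ⟨f_1, ..., f_s, 1 - Y·f⟩ of the polynomial ring S' = K[X_1, ..., X_n, Y]. -/

import Mathlib

/-- **Rabinowitsch trick / radical membership.**
Let `K` be a field, `S = K[X₁, …, Xₙ]`, `I = ⟨f₁, …, f_s⟩` an ideal of `S` and
`f ∈ S`.  Then `f` belongs to the radical of `I` iff `1` belongs to the ideal
`⟨f₁, …, f_s, 1 - Y·f⟩` of `S' = K[X₁, …, Xₙ, Y]`. -/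
theorem radical_membership_iff_one_mem
    {K : Type*} [Field K] {n s : ℕ}
    (F : Fin s → MvPolynomial (Fin n) K) (f : MvPolynomial (Fin n) K) :
    f ∈ (Ideal.span (Set.range F)).radical ↔
      (1 : Polynomial (MvPolynomial (Fin n) K)) ∈
        Ideal.span
          (Set.range (fun i => Polynomial.C (F i)) ∪
            {1 - Polynomial.X * Polynomial.C f}) := by
  constructor
  · rintro hf
    obtain ⟨k, hk⟩ := Ideal.mem_radical_iff.mp hf
    let S := MvPolynomial (Fin n) K
    let J : Ideal (Polynomial S) :=
      Ideal.span (Set.range (fun i => Polynomial.C (F i)) ∪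
        {1 - Polynomial.X * Polynomial.C f})
    show (1 : Polynomial S) ∈ J
    have hA : (1 : Polynomial S) - (Polynomial.X * Polynomial.C f) ^ k ∈ J := by
      have hdvd : ((1 : Polynomial S) - Polynomial.X * Polynomial.C f) ∣
          (1 - (Polynomial.X * Polynomial.C f) ^ k) := by
        refine ⟨∑ i ∈ Finset.range k, (Polynomial.X * Polynomial.C f) ^ i, ?_⟩
        have hg := geom_sum_mul (Polynomial.X * Polynomial.C f) k
        linear_combination hg
      obtain ⟨c, hc⟩ := hdvd
      rw [hc]
      exact Ideal.mul_mem_right _ _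
        (Ideal.subset_span (Set.mem_union_right _ rfl))
    have hB : ((Polynomial.X * Polynomial.C f) ^ k : Polynomial S) ∈ J := by
      have hmem : (Polynomial.C (f ^ k) : Polynomial S) ∈ J := by
        have hmem' : Polynomial.C (f ^ k) ∈
            Ideal.map (Polynomial.C : S →+* Polynomial S) (Ideal.span (Set.range F)) :=
          Ideal.mem_map_of_mem _ hk
        rw [Ideal.map_span, ← Set.range_comp] at hmem'
        refine Ideal.span_mono ?_ hmem'
        rintro y ⟨i, rfl⟩
        exact Set.mem_union_left _ ⟨i, rfl⟩
      have hxk : (Polynomial.X * Polynomial.C f) ^ k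
          = Polynomial.X ^ k * Polynomial.C (f ^ k) := by
        rw [mul_pow, map_pow]
      rw [hxk]
      exact Ideal.mul_mem_left _ _ hmem
    have := J.add_mem hA hB
    rwa [sub_add_cancel] at this
  · intro h1
    rw [Ideal.mem_radical_iff]
    let S := MvPolynomial (Fin n) K
    let I : Ideal S := Ideal.span (Set.range F)
    letI : CommRing (S ⧸ I) := Ideal.Quotient.commRing I
    have hmap : (1 : Polynomial (S ⧸ I)) ∈
        Ideal.map (Polynomial.mapRingHom (Ideal.Quotient.mk I))
          (Ideal.span (Set.range (fun i => Polynomial.C (F i)) ∪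
            {1 - Polynomial.X * Polynomial.C f})) := by
      have := Ideal.mem_map_of_mem (Polynomial.mapRingHom (Ideal.Quotient.mk I)) h1
      rwa [map_one] at this
    have hsub : Ideal.map (Polynomial.mapRingHom (Ideal.Quotient.mk I))
          (Ideal.span (Set.range (fun i => Polynomial.C (F i)) ∪
            {1 - Polynomial.X * Polynomial.C f})) ≤
        Ideal.span {1 - Polynomial.X * Polynomial.C (Ideal.Quotient.mk I f)} := by
      rw [Ideal.map_span]
      refine Ideal.span_le.mpr ?_
      rintro y ⟨z, hz, rfl⟩
      rcases hz with ⟨i, rfl⟩ | rfl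
      · have hz0 : Polynomial.mapRingHom (Ideal.Quotient.mk I) (Polynomial.C (F i)) = 0 := by
          have h0 : Ideal.Quotient.mk I (F i) = 0 := Ideal.Quotient.eq_zero_iff_mem.mpr
            (Ideal.subset_span (Set.mem_range_self i))
          simp [h0]
        rw [hz0]; exact Ideal.zero_mem _
      · refine Ideal.subset_span ?_
        simp
    have hone : (1 : Polynomial (S ⧸ I)) ∈
        Ideal.span {1 - Polynomial.X * Polynomial.C (Ideal.Quotient.mk I f)} := hsub hmap
    rw [Ideal.mem_span_singleton] at hone
    have hunit : IsUnit ((1 : Polynomial (S ⧸ I))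
        - Polynomial.X * Polynomial.C (Ideal.Quotient.mk I f)) :=
      isUnit_of_dvd_one hone
    rw [Polynomial.isUnit_iff_coeff_isUnit_isNilpotent] at hunit
    have hnil : IsNilpotent (((1 : Polynomial (S ⧸ I))
        - Polynomial.X * Polynomial.C (Ideal.Quotient.mk I f)).coeff 1) :=
      hunit.2 1 one_ne_zero
    have hco : (((1 : Polynomial (S ⧸ I))
        - Polynomial.X * Polynomial.C (Ideal.Quotient.mk I f))).coeff 1
        = -(Ideal.Quotient.mk I f) := by
      simp [Polynomial.coeff_one, Polynomial.coeff_X_mul]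
    rw [hco] at hnil
    have hnil' : IsNilpotent (Ideal.Quotient.mk I f) := by
      have := hnil.neg
      rwa [neg_neg] at this
    obtain ⟨k, hk⟩ := hnil'
    refine ⟨k, ?_⟩
    have hk0 : Ideal.Quotient.mk I (f ^ k) = 0 := by rw [map_pow]; exact hk
    exact Ideal.Quotient.eq_zero_iff_mem.mp hk0
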